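/- arXiv:2203.09861 — 3 statements merged into one kernel-verified Lean document; each statement's English description precedes it below -/
import Mathlib

section
/- Fix γ > −1. For every n ≥ 0 and every k ∈ ℤ, the function ψ_{n,k}^γ satisfies, on the interior of ∂₊S𝔻, the joint eigenequations 𝓣_γ ψ_{n,k}^γ = (n+1+γ)² ψ_{n,k}^γ and (1/i)∂_β ψ_{n,k}^γ = (n−2k) ψ_{n,k}^γ. -/
open MeasureTheory Complex Metric Real Set

noncomputable section

/-! ## Geometry of the Euclidean disk and its space of lines (fan-beam coordinates) -/

/-- The chord of the closed unit disk through the boundary point `exp (I β)` with incoming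
direction `exp (I (β + π + α))`, parametrized by arclength `t ∈ [0, 2 cos α]`. -/
def chord (β α t : ℝ) : ℂ :=
  Complex.exp ((β : ℂ) * Complex.I) +
    (t : ℂ) * Complex.exp (((β + π + α : ℝ) : ℂ) * Complex.I)

/-- The X-ray transform `I₀` in fan-beam coordinates. -/
def XRT (f : ℂ → ℂ) (β α : ℝ) : ℂ :=
  ∫ t in (0:ℝ)..(2 * Real.cos α), f (chord β α t)

/-- The fan-beam coordinate `α₋(z, θ)` of the unique chord through `z` with direction `exp (I θ)`,
determined by `sin α₋ = Im (z * exp (-I θ))`. -/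
def alpham (z : ℂ) (θ : ℝ) : ℝ :=
  Real.arcsin ((z * Complex.exp (-(θ : ℂ) * Complex.I)).im)

/-- The fan-beam coordinate `β₋(z, θ)`, determined by `β₋ + α₋ + π = θ`. -/
def betam (z : ℂ) (θ : ℝ) : ℝ := θ - π - alpham z θ

/-- Reduction modulo `2π` to the fundamental interval `(0, 2π]`. -/
def wrap (x : ℝ) : ℝ := toIocMod Real.two_pi_pos 0 x

/-- The backprojection operator `I₀^♯`. -/
def BP (g : ℝ × ℝ → ℂ) (z : ℂ) : ℂ :=
  ∫ θ in (0:ℝ)..(2 * π), g (wrap (betam z θ), alpham z θ)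

/-- The weighted backprojection operator `I₀^♯ μ^{-2γ-1}`, where `μ(β, α) = cos α`. -/
def BPW (γ : ℝ) (g : ℝ × ℝ → ℂ) : ℂ → ℂ :=
  BP fun p => ((Real.cos p.2 ^ (-(2 * γ) - 1) : ℝ) : ℂ) * g p

/-- The rectangle `(0, 2π] × [-π/2, π/2]` modelling the space of lines `∂₊S𝔻`. -/
def Rect : Set (ℝ × ℝ) := Set.Ioc (0:ℝ) (2 * π) ×ˢ Set.Icc (-(π / 2)) (π / 2)

/-- The measure `μ^{-2γ} dβ dα` on `∂₊S𝔻`, where `μ(β, α) = cos α`. -/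
def bdryMeasure (γ : ℝ) : Measure (ℝ × ℝ) :=
  ((volume : Measure (ℝ × ℝ)).restrict Rect).withDensity
    fun p => ENNReal.ofReal (Real.cos p.2 ^ (-(2 * γ)))

/-- The measure `d^γ dz` on the closed unit disk, where `d(z) = 1 - |z|²`. -/
def diskMeasure (γ : ℝ) : Measure ℂ :=
  ((volume : Measure ℂ).restrict (Metric.closedBall 0 1)).withDensity
    fun z => ENNReal.ofReal ((1 - ‖z‖ ^ 2) ^ γ)

/-- `L n` is the monic orthogonal polynomial of degree `n` on `[-1, 1]` for the weight
`(1 - x²)^(γ + 1/2)`. -/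
def IsMonicOrtho (γ : ℝ) (L : ℕ → Polynomial ℝ) : Prop :=
  ∀ n, (L n).Monic ∧ (L n).natDegree = n ∧
    ∀ m, m < n →
      (∫ x in (-1:ℝ)..(1:ℝ), (L n).eval x * x ^ m * (1 - x ^ 2) ^ (γ + 1/2)) = 0

/-- The functions `ψ_{n,k}^γ = μ^{2γ+1} ((-1)^n / 2π) e^{i(n-2k)(β+α)} L_n^γ (sin α)`. -/
def psiF (γ : ℝ) (L : ℕ → Polynomial ℝ) (n : ℕ) (k : ℤ) (p : ℝ × ℝ) : ℂ :=
  ((Real.cos p.2 ^ (2 * γ + 1) : ℝ) : ℂ) * (((-1 : ℝ) ^ n / (2 * π) : ℝ) : ℂ) *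
    Complex.exp (Complex.I * ((n : ℂ) - 2 * (k : ℂ)) * ((p.1 + p.2 : ℝ) : ℂ)) *
    (((L n).eval (Real.sin p.2) : ℝ) : ℂ)

/-- The generalized Zernike polynomials
`G_{n,k}^γ (z) = (1/2π) ∫₀^{2π} e^{i(n-2k)θ} L_n^γ ((i/2)(z̄ e^{iθ} - z e^{-iθ})) dθ`. -/
def GZ (γ : ℝ) (L : ℕ → Polynomial ℝ) (n : ℕ) (k : ℤ) (z : ℂ) : ℂ :=
  ((1 / (2 * π) : ℝ) : ℂ) * ∫ θ in (0:ℝ)..(2 * π),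
    Complex.exp (Complex.I * ((n : ℂ) - 2 * (k : ℂ)) * (θ : ℂ)) *
      Polynomial.aeval
        ((Complex.I / 2) *
          ((starRingEnd ℂ) z * Complex.exp ((θ : ℂ) * Complex.I) -
            z * Complex.exp (-(θ : ℂ) * Complex.I))) (L n)

/-- `L²(𝔻, d^γ dz)`-norm. -/
def dNorm (γ : ℝ) (f : ℂ → ℂ) : ℝ := Real.sqrt (∫ z, ‖f z‖ ^ 2 ∂(diskMeasure γ))

/-- `L²(∂₊S𝔻, μ^{-2γ} dβ dα)`-norm. -/
def bNorm (γ : ℝ) (g : ℝ × ℝ → ℂ) : ℝ := Real.sqrt (∫ p, ‖g p‖ ^ 2 ∂(bdryMeasure γ))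

/-- `G_{n,k}^γ` normalized to unit norm in `L²(𝔻, d^γ dz)`. -/
def Ghat (γ : ℝ) (L : ℕ → Polynomial ℝ) (n : ℕ) (k : ℤ) (z : ℂ) : ℂ :=
  (((dNorm γ (GZ γ L n k))⁻¹ : ℝ) : ℂ) * GZ γ L n k z

/-- `ψ_{n,k}^γ` normalized to unit norm in `L²(∂₊S𝔻, μ^{-2γ} dβ dα)`. -/
def psihat (γ : ℝ) (L : ℕ → Polynomial ℝ) (n : ℕ) (k : ℤ) (p : ℝ × ℝ) : ℂ :=
  (((bNorm γ (psiF γ L n k))⁻¹ : ℝ) : ℂ) * psiF γ L n k p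

/-- The squared singular values `(σ_{n,k}^γ)²`. -/
def sigSq (γ : ℝ) (n k : ℕ) : ℝ :=
  2 ^ (2 * γ + 2) * π * (n.choose k) *
    Real.Gamma ((n : ℝ) - k + γ + 1) * Real.Gamma ((k : ℝ) + γ + 1) /
      Real.Gamma ((n : ℝ) + 2 * γ + 2)

/-- The singular values `σ_{n,k}^γ ≥ 0`. -/
def sig (γ : ℝ) (n k : ℕ) : ℝ := Real.sqrt (sigSq γ n k)

/-- The Beta function `B(x,y) = Γ(x)Γ(y)/Γ(x+y)`. -/
def betaFn (x y : ℝ) : ℝ := Real.Gamma x * Real.Gamma y / Real.Gamma (x + y)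

/-! ## Differential operators -/

/-- Radial derivative `∂_ρ` in polar coordinates `z = ρ e^{iω}`. -/
def dRho (f : ℂ → ℂ) (z : ℂ) : ℂ :=
  deriv (fun r : ℝ => f ((r : ℂ) * Complex.exp ((z.arg : ℂ) * Complex.I))) ‖z‖

/-- Angular derivative `∂_ω` in polar coordinates `z = ρ e^{iω}`. -/
def dOmega (f : ℂ → ℂ) (z : ℂ) : ℂ :=
  deriv (fun w : ℝ => f ((‖z‖ : ℂ) * Complex.exp ((w : ℂ) * Complex.I))) z.arg

/-- The operator `𝓛_γ = -(1-ρ²)∂_ρ² - (ρ⁻¹ - (3+2γ)ρ)∂_ρ - ρ⁻²∂_ω² + (γ+1)²`. -/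
def Lop (γ : ℝ) (f : ℂ → ℂ) (z : ℂ) : ℂ :=
  -(1 - (‖z‖ : ℂ) ^ 2) * dRho (dRho f) z -
    ((‖z‖ : ℂ)⁻¹ - (3 + 2 * (γ : ℂ)) * (‖z‖ : ℂ)) * dRho f z -
    ((‖z‖ : ℂ) ^ 2)⁻¹ * dOmega (dOmega f) z + ((γ : ℂ) + 1) ^ 2 * f z

/-- `∂_β` on `∂₊S𝔻`. -/
def dBeta (g : ℝ × ℝ → ℂ) (p : ℝ × ℝ) : ℂ := deriv (fun b : ℝ => g (b, p.2)) p.1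

/-- `∂_α` on `∂₊S𝔻`. -/
def dAlpha (g : ℝ × ℝ → ℂ) (p : ℝ × ℝ) : ℂ := deriv (fun a : ℝ => g (p.1, a)) p.2

/-- The operator `T = ∂_β - ∂_α`. -/
def Tline (g : ℝ × ℝ → ℂ) (p : ℝ × ℝ) : ℂ := dBeta g p - dAlpha g p

/-- The power `μ^e = (cos α)^e` as a complex-valued function on `∂₊S𝔻`. -/
def muC (e : ℝ) (p : ℝ × ℝ) : ℂ := ((Real.cos p.2 ^ e : ℝ) : ℂ)

/-- The operator `𝓣_γ = -μ^{2γ} T μ^{-2γ} T + γ²`. -/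
def Tgam (γ : ℝ) (g : ℝ × ℝ → ℂ) (p : ℝ × ℝ) : ℂ :=
  -muC (2 * γ) p * Tline (fun q => muC (-(2 * γ)) q * Tline g q) p + (γ : ℂ) ^ 2 * g p

/-! ## Scattering relations and the space `C^∞_{α,+,+}(∂₊S𝔻)` -/

/-- The scattering relation `𝒮(β, α) = (β + π + 2α, π - α)`. -/
def Scat (p : ℝ × ℝ) : ℝ × ℝ := (p.1 + π + 2 * p.2, π - p.2)

/-- The antipodal scattering relation `𝒮_A(β, α) = (β + π + 2α, -α)`. -/
def ScatA (p : ℝ × ℝ) : ℝ × ℝ := (p.1 + π + 2 * p.2, -p.2)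

/-- Membership in `C^∞_{α,+,+}(∂₊S𝔻)`: `f`, given on the strip `ℝ × [-π/2, π/2]` (2π-periodically
in β), has an even extension through the scattering relation which is smooth on all of `∂S𝔻`
(modelled as a doubly 2π-periodic smooth function on `ℝ²` invariant under `𝒮`), and `f` is
invariant under the antipodal scattering relation. -/
def MemCapp (f : ℝ × ℝ → ℂ) : Prop :=
  ∃ F : ℝ × ℝ → ℂ, ContDiff ℝ (⊤ : ℕ∞) F ∧
    (∀ p : ℝ × ℝ, F (p.1 + 2 * π, p.2) = F p) ∧
    (∀ p : ℝ × ℝ, F (p.1, p.2 + 2 * π) = F p) ∧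
    (∀ p : ℝ × ℝ, F (Scat p) = F p) ∧
    (∀ p : ℝ × ℝ, p.2 ∈ Set.Icc (-(π / 2)) (π / 2) → F (ScatA p) = F p) ∧
    (∀ p : ℝ × ℝ, p.2 ∈ Set.Icc (-(π / 2)) (π / 2) → f p = F p)

/-- `C^∞(𝔻)`: smooth up to the boundary of the closed unit disk. -/
def CinfDisk (f : ℂ → ℂ) : Prop := ContDiffOn ℝ (⊤ : ℕ∞) f (Metric.closedBall 0 1)

end

noncomputable section ODEaux
open Polynomial intervalIntegral


lemma half_weight_int {s : ℝ} (hs : -1 < s) {a b : ℝ} (ha : -1 < a) (hb : b ≤ 1)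
    (hab : a ≤ b) :
    IntervalIntegrable (fun x => (1 - x^2) ^ s) volume a b := by
  have h1 : IntervalIntegrable (fun x : ℝ => (1 - x) ^ s) volume a b := by
    have := (intervalIntegral.intervalIntegrable_rpow' (a := 1 - b) (b := 1 - a) hs).comp_sub_left 1
    simpa using this.symm
  have h2 : IntervalIntegrable (fun x : ℝ => (1 - x) ^ s * (1 + x) ^ s) volume a b := by
    refine h1.mul_continuousOn ?_
    apply ContinuousOn.rpow_const (by fun_prop)
    intro x hx
    rw [uIcc_of_le hab] at hx
    have h : -1 < x := lt_of_lt_of_le ha hx.1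
    exact Or.inl (ne_of_gt (by linarith))
  rw [intervalIntegrable_iff_integrableOn_Ioc_of_le hab] at h2 ⊢
  refine h2.congr_fun ?_ measurableSet_Ioc
  intro x hx
  have h1x : (0:ℝ) ≤ 1 - x := by nlinarith [hx.2]
  have h2x : (0:ℝ) ≤ 1 + x := by nlinarith [lt_of_lt_of_le ha hx.1.le]
  show ((1-x)^s*(1+x)^s : ℝ) = (1 - x^2)^s
  rw [show (1 - x^2 : ℝ) = (1-x)*(1+x) by ring, Real.mul_rpow h1x h2x]

lemma weight_int {s : ℝ} (hs : -1 < s) :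
    IntervalIntegrable (fun x => (1 - x^2) ^ s) volume (-1) 1 := by
  have h01 : IntervalIntegrable (fun x => (1 - x^2) ^ s) volume 0 1 :=
    half_weight_int hs (by norm_num) le_rfl (by norm_num)
  have hneg : IntervalIntegrable (fun x : ℝ => (1 - x^2) ^ s) volume (-1) 0 := by
    have := (IntervalIntegrable.iff_comp_neg (f := fun x : ℝ => (1 - x^2) ^ s)).mp h01
    simpa using this.symm
  exact hneg.trans h01

lemma contW_int {s : ℝ} (hs : -1 < s) (f : ℝ → ℝ) (hf : Continuous f) :
    IntervalIntegrable (fun x => f x * (1 - x^2) ^ s) volume (-1) 1 :=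
  (weight_int hs).continuousOn_mul hf.continuousOn

lemma polyW_int {s : ℝ} (hs : -1 < s) (P : Polynomial ℝ) :
    IntervalIntegrable (fun x => P.eval x * (1 - x^2) ^ s) volume (-1) 1 :=
  contW_int hs _ P.continuous

/-- Orthogonality to all polynomials of degree < n. -/
lemma ortho_poly_gen {γ : ℝ} (hγ : -1 < γ) (F : Polynomial ℝ) (n : ℕ)
    (hFo : ∀ m, m < n → ∫ x in (-1:ℝ)..1, F.eval x * x ^ m * (1 - x^2) ^ (γ + 1/2) = 0)
    (q : Polynomial ℝ) (hq : q.natDegree < n) :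
    ∫ x in (-1:ℝ)..1, F.eval x * q.eval x * (1 - x^2) ^ (γ + 1/2) = 0 := by
  have hs : (-1:ℝ) < γ + 1/2 := by linarith
  have hcongr : ∀ x : ℝ, F.eval x * q.eval x * (1 - x^2) ^ (γ + 1/2)
      = ∑ m ∈ Finset.range n, q.coeff m * (F.eval x * x ^ m * (1 - x^2) ^ (γ + 1/2)) := by
    intro x
    rw [q.eval_eq_sum_range' hq, Finset.mul_sum, Finset.sum_mul]
    exact Finset.sum_congr rfl fun m _ => by ring
  have hint : ∀ m : ℕ, IntervalIntegrable
      (fun x => q.coeff m * (F.eval x * x ^ m * (1 - x^2) ^ (γ + 1/2))) volume (-1) 1 := by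
    intro m
    have := (polyW_int hs (F * X ^ m)).const_mul (q.coeff m)
    simpa [mul_assoc] using this
  calc ∫ x in (-1:ℝ)..1, F.eval x * q.eval x * (1 - x^2) ^ (γ + 1/2)
      = ∫ x in (-1:ℝ)..1, ∑ m ∈ Finset.range n,
          q.coeff m * (F.eval x * x ^ m * (1 - x^2) ^ (γ + 1/2)) := by
        simp only [hcongr]
    _ = ∑ m ∈ Finset.range n, ∫ x in (-1:ℝ)..1,
          q.coeff m * (F.eval x * x ^ m * (1 - x^2) ^ (γ + 1/2)) :=
        intervalIntegral.integral_finset_sum fun m _ => hint m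
    _ = 0 := by
        refine Finset.sum_eq_zero fun m hm => ?_
        rw [intervalIntegral.integral_const_mul, hFo m (Finset.mem_range.mp hm)]
        ring

/-- The Sturm--Liouville operator on polynomials. -/
def Dpol (γ : ℝ) (P : Polynomial ℝ) : Polynomial ℝ :=
  (1 - X^2) * P.derivative.derivative - C (2*γ+3) * X * P.derivative

/-- Integration by parts / symmetry of `Dpol`. -/
lemma ibp {γ : ℝ} (hγ : -1 < γ) (f g : Polynomial ℝ) :
    ∫ x in (-1:ℝ)..1, (Dpol γ f).eval x * g.eval x * (1 - x^2) ^ (γ + 1/2)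
      = ∫ x in (-1:ℝ)..1, f.eval x * (Dpol γ g).eval x * (1 - x^2) ^ (γ + 1/2) := by
  have hs : (-1:ℝ) < γ + 1/2 := by linarith
  set P : Polynomial ℝ := Dpol γ f * g - f * Dpol γ g with hP
  set h : ℝ → ℝ := fun x => (1 - x^2) ^ (γ + 3/2) *
    (f.derivative.eval x * g.eval x - f.eval x * g.derivative.eval x) with hh
  have hderiv : ∀ x ∈ Ioo (-1:ℝ) 1, HasDerivAt h (P.eval x * (1 - x^2) ^ (γ + 1/2)) x := by
    intro x hx
    have hxpos : (0:ℝ) < 1 - x^2 := by nlinarith [hx.1, hx.2]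
    have hbase : HasDerivAt (fun x : ℝ => 1 - x^2) (-(2*x)) x := by
      simpa using ((hasDerivAt_pow 2 x).const_sub 1)
    have h1 := hbase.rpow_const (p := γ + 3/2) (Or.inl (ne_of_gt hxpos))
    rw [show γ + 3/2 - 1 = γ + 1/2 by ring] at h1
    have h2 : HasDerivAt (fun x : ℝ => f.derivative.eval x * g.eval x - f.eval x * g.derivative.eval x)
        (f.derivative.derivative.eval x * g.eval x - f.eval x * g.derivative.derivative.eval x) x := by
      have := ((f.derivative.hasDerivAt x).mul (g.hasDerivAt x)).sub
        ((f.hasDerivAt x).mul (g.derivative.hasDerivAt x))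
      refine this.congr_deriv ?_
      ring
    have hsplit : ((1 - x^2 : ℝ)) ^ (γ + 3/2) = (1 - x^2) ^ (γ + 1/2) * (1 - x^2) := by
      rw [show (γ + 3/2 : ℝ) = (γ + 1/2) + 1 by ring, Real.rpow_add hxpos, Real.rpow_one]
    have := h1.mul h2
    refine this.congr_deriv ?_
    rw [hsplit]
    simp only [hP, Dpol, eval_sub, eval_mul, eval_add, eval_one, eval_pow, eval_X, eval_C,
      eval_ofNat]
    ring
  have hcont : ContinuousOn h (Icc (-1:ℝ) 1) := by
    apply ContinuousOn.mul
    · apply ContinuousOn.rpow_const (by fun_prop)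
      intro x _
      exact Or.inr (by linarith)
    · fun_prop
  have hintP : IntervalIntegrable (fun x => P.eval x * (1 - x^2) ^ (γ + 1/2)) volume (-1) 1 :=
    polyW_int hs P
  have hftc := intervalIntegral.integral_eq_sub_of_hasDeriv_right_of_le (by norm_num) hcont
    (fun x hx => (hderiv x hx).hasDerivWithinAt) hintP
  have hzero : (∫ x in (-1:ℝ)..1, P.eval x * (1 - x^2) ^ (γ + 1/2)) = 0 := by
    rw [hftc]
    have hne : (γ + 3/2 : ℝ) ≠ 0 := ne_of_gt (by linarith)
    have e1 : h 1 = 0 := by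
      simp only [hh, one_pow, sub_self, Real.zero_rpow hne, zero_mul]
    have e2 : h (-1) = 0 := by
      simp only [hh, neg_one_sq, sub_self, Real.zero_rpow hne, zero_mul]
    rw [e1, e2, sub_zero]
  have hi1 : IntervalIntegrable (fun x => (Dpol γ f).eval x * g.eval x * (1 - x^2) ^ (γ + 1/2))
      volume (-1) 1 := by
    have := polyW_int hs (Dpol γ f * g); simpa using this
  have hi2 : IntervalIntegrable (fun x => f.eval x * (Dpol γ g).eval x * (1 - x^2) ^ (γ + 1/2))
      volume (-1) 1 := by
    have := polyW_int hs (f * Dpol γ g); simpa using this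
  have : (∫ x in (-1:ℝ)..1, P.eval x * (1 - x^2) ^ (γ + 1/2))
      = (∫ x in (-1:ℝ)..1, (Dpol γ f).eval x * g.eval x * (1 - x^2) ^ (γ + 1/2))
        - ∫ x in (-1:ℝ)..1, f.eval x * (Dpol γ g).eval x * (1 - x^2) ^ (γ + 1/2) := by
    rw [← intervalIntegral.integral_sub hi1 hi2]
    apply intervalIntegral.integral_congr
    intro x _
    simp only [hP, eval_sub, eval_mul]
    ring
  rw [hzero] at this
  linarith [this]

/-- A polynomial whose weighted self-inner-product vanishes is zero. -/
lemma poly_zero_of_selfint {γ : ℝ} (hγ : -1 < γ) (R : Polynomial ℝ)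
    (h0 : ∫ x in (-1:ℝ)..1, R.eval x * R.eval x * (1 - x^2) ^ (γ + 1/2) = 0) :
    R = 0 := by
  have hs : (-1:ℝ) < γ + 1/2 := by linarith
  by_contra hR
  obtain ⟨x₀, hx₀, hRx₀⟩ : ∃ x ∈ Ioo (-1:ℝ) 1, R.eval x ≠ 0 := by
    by_contra hc
    push_neg at hc
    exact hR (Polynomial.eq_zero_of_infinite_isRoot R
      (((Set.Ioo_infinite (by norm_num : (-1:ℝ) < 1)).mono (fun x hx => hc x hx))))
  have hU : IsOpen (Ioo (-1:ℝ) 1 ∩ {y | R.eval y ≠ 0}) :=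
    isOpen_Ioo.inter (isOpen_ne.preimage R.continuous)
  obtain ⟨ε, hε, hball⟩ := Metric.isOpen_iff.mp hU x₀ ⟨hx₀, hRx₀⟩
  set c := x₀ - ε/2
  set d := x₀ + ε/2
  have hsub : Ioo c d ⊆ Ioo (-1:ℝ) 1 ∩ {y | R.eval y ≠ 0} := by
    intro y hy
    apply hball
    rw [Metric.mem_ball, Real.dist_eq, abs_lt]
    constructor <;> [simp only [c] at hy; simp only [d] at hy] <;> [linarith [hy.1]; linarith [hy.2]]
  have hcd : c < d := by simp only [c, d]; linarith
  have hii : IntervalIntegrable (fun x => R.eval x * R.eval x * (1 - x^2) ^ (γ + 1/2))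
      volume (-1) 1 := by
    have := polyW_int hs (R * R); simpa using this
  have hballsub : ∀ y ∈ Icc c d, y ∈ Ioo (-1:ℝ) 1 ∩ {y | R.eval y ≠ 0} := by
    intro y hy
    apply hball
    rw [Metric.mem_ball, Real.dist_eq, abs_lt]
    simp only [c, d, mem_Icc] at hy
    constructor <;> linarith [hy.1, hy.2, hε]
  have hiicd : IntervalIntegrable (fun x => R.eval x * R.eval x * (1 - x^2) ^ (γ + 1/2))
      volume c d := by
    apply hii.mono_set
    rw [uIcc_of_le hcd.le, uIcc_of_le (by norm_num : (-1:ℝ) ≤ 1)]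
    exact fun y hy => ⟨(hballsub y hy).1.1.le, (hballsub y hy).1.2.le⟩
  have hpos : 0 < ∫ x in c..d, R.eval x * R.eval x * (1 - x^2) ^ (γ + 1/2) := by
    apply intervalIntegral.intervalIntegral_pos_of_pos_on hiicd _ hcd
    intro y hy
    obtain ⟨hy1, hy2⟩ := hballsub y (Ioo_subset_Icc_self hy)
    have hw : (0:ℝ) < (1 - y^2) ^ (γ + 1/2) :=
      Real.rpow_pos_of_pos (by nlinarith [hy1.1, hy1.2]) _
    have h2 : eval y R ≠ 0 := hy2
    exact mul_pos (mul_self_pos.mpr h2) hw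
  have hnn : ∀ x ∈ Ioc (-1:ℝ) 1, 0 ≤ R.eval x * R.eval x * (1 - x^2) ^ (γ + 1/2) := by
    intro x hx
    have : (0:ℝ) ≤ (1 - x^2) ^ (γ + 1/2) := Real.rpow_nonneg (by nlinarith [hx.1, hx.2]) _
    nlinarith [mul_self_nonneg (R.eval x)]
  have hmono : (∫ x in c..d, R.eval x * R.eval x * (1 - x^2) ^ (γ + 1/2))
      ≤ ∫ x in (-1:ℝ)..1, R.eval x * R.eval x * (1 - x^2) ^ (γ + 1/2) := by
    apply intervalIntegral.integral_mono_interval (μ := volume)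
      (by linarith [(hballsub c (by simp only [c, d, mem_Icc]; constructor <;> linarith)).1.1] : (-1:ℝ) ≤ c)
      hcd.le
      (by linarith [(hballsub d (by simp only [c, d, mem_Icc]; constructor <;> linarith)).1.2] : d ≤ 1)
    · rw [Filter.EventuallyLE, MeasureTheory.ae_restrict_iff' measurableSet_Ioc]
      filter_upwards with x hx using hnn x hx
    · exact hii
  linarith [hpos, hmono, h0.le, h0.ge]

lemma Dpol_coeff_two (γ : ℝ) (P : Polynomial ℝ) (i : ℕ) :
    (Dpol γ P).coeff (i+2) = P.coeff (i+4) * ((i+4)*(i+3))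
      - P.coeff (i+2) * ((i+2)*(i+1)) - (2*γ+3) * (P.coeff (i+2) * (i+2)) := by
  simp only [Dpol, coeff_sub, sub_mul, one_mul, mul_assoc]
  rw [show (X^2 * P.derivative.derivative : Polynomial ℝ).coeff (i+2)
      = P.derivative.derivative.coeff i from coeff_X_pow_mul _ 2 i,
    coeff_C_mul, show ((X : Polynomial ℝ) * P.derivative).coeff (i+2)
      = P.derivative.coeff (i+1) from coeff_X_mul _ _]
  simp only [coeff_derivative]
  push_cast
  ring

lemma Dpol_coeff_one (γ : ℝ) (P : Polynomial ℝ) :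
    (Dpol γ P).coeff 1 = P.coeff 3 * 6 - (2*γ+3) * P.coeff 1 := by
  simp only [Dpol, coeff_sub, sub_mul, one_mul, mul_assoc]
  rw [show ((X:Polynomial ℝ)^2 * P.derivative.derivative).coeff 1 = 0 by
      rw [mul_comm, coeff_mul_X_pow']; norm_num,
    coeff_C_mul, show ((X : Polynomial ℝ) * P.derivative).coeff 1
      = P.derivative.coeff 0 from coeff_X_mul _ _]
  simp only [coeff_derivative]
  push_cast
  ring

lemma Dpol_coeff_zero (γ : ℝ) (P : Polynomial ℝ) :
    (Dpol γ P).coeff 0 = P.coeff 2 * 2 := by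
  simp only [Dpol, coeff_sub, sub_mul, one_mul, mul_assoc]
  rw [show ((X:Polynomial ℝ)^2 * P.derivative.derivative).coeff 0 = 0 by
      rw [mul_comm, coeff_mul_X_pow']; norm_num,
    coeff_C_mul, show ((X : Polynomial ℝ) * P.derivative).coeff 0 = 0 by
      rw [mul_comm, ← pow_one (X : Polynomial ℝ), coeff_mul_X_pow']; norm_num]
  simp only [coeff_derivative]
  push_cast
  ring

lemma Dpol_natDegree_le (γ : ℝ) (P : Polynomial ℝ) : (Dpol γ P).natDegree ≤ P.natDegree := by
  rw [Polynomial.natDegree_le_iff_coeff_eq_zero]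
  intro N hN
  have hz : ∀ j, P.natDegree < j → P.coeff j = 0 := fun j hj => coeff_eq_zero_of_natDegree_lt hj
  match N, hN with
  | 0, hN => exact absurd hN (by omega)
  | 1, hN =>
    rw [Dpol_coeff_one, hz 3 (by omega), hz 1 (by omega)]; ring
  | (i+2), hN =>
    rw [Dpol_coeff_two, hz (i+4) (by omega), hz (i+2) (by omega)]; ring

/-- The Gegenbauer ODE, derived from monic-orthogonality. -/
lemma gegenbauer_ode {γ : ℝ} (hγ : -1 < γ) {L : ℕ → Polynomial ℝ} (hL : IsMonicOrtho γ L)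
    (n : ℕ) :
    Dpol γ (L n) + C ((n:ℝ) * ((n:ℝ) + 2*γ + 2)) * L n = 0 := by
  have hs : (-1:ℝ) < γ + 1/2 := by linarith
  obtain ⟨hmon, hdeg, hortho⟩ := hL n
  set P := L n with hPdef
  set c : ℝ := (n:ℝ) * ((n:ℝ) + 2*γ + 2) with hc
  set R := Dpol γ P + C c * P with hRdef
  have hPz : ∀ j, n < j → P.coeff j = 0 := fun j hj =>
    coeff_eq_zero_of_natDegree_lt (by rw [hdeg]; exact hj)
  have hPn : P.coeff n = 1 := by
    have := hmon.coeff_natDegree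
    rwa [hdeg] at this
  have hRcoeff : ∀ m, n ≤ m → R.coeff m = 0 := by
    intro m hm
    rw [hRdef, coeff_add, coeff_C_mul]
    match m, hm with
    | 0, hm =>
      have hn0 : n = 0 := by omega
      rw [Dpol_coeff_zero, hPz 2 (by omega), hc, hn0]
      push_cast
      ring
    | 1, hm =>
      rw [Dpol_coeff_one, hPz 3 (by omega)]
      rcases Nat.le_one_iff_eq_zero_or_eq_one.mp hm with h0 | h1
      · rw [hPz 1 (by omega), hc, h0]; push_cast; ring
      · rw [h1] at hPn
        rw [hPn, hc, h1]; push_cast; ring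
    | (i+2), hm =>
      rw [Dpol_coeff_two, hPz (i+4) (by omega)]
      rcases Nat.lt_or_ge n (i+2) with hlt | hge
      · rw [hPz (i+2) hlt]; ring
      · have heq : n = i+2 := by omega
        rw [heq] at hPn
        rw [hPn, hc, heq]; push_cast; ring
  -- orthogonality of R to monomials of degree < n
  have horthR : ∀ m, m < n → ∫ x in (-1:ℝ)..1, R.eval x * x ^ m * (1 - x^2) ^ (γ + 1/2) = 0 := by
    intro m hm
    have hi1 : IntervalIntegrable
        (fun x => (Dpol γ P).eval x * x ^ m * (1 - x^2) ^ (γ + 1/2)) volume (-1) 1 := by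
      have := polyW_int hs (Dpol γ P * X ^ m); simpa [mul_assoc] using this
    have hi2 : IntervalIntegrable
        (fun x => c * (P.eval x * x ^ m * (1 - x^2) ^ (γ + 1/2))) volume (-1) 1 := by
      have := (polyW_int hs (P * X ^ m)).const_mul c; simpa [mul_assoc] using this
    have h1 : ∫ x in (-1:ℝ)..1, (Dpol γ P).eval x * x ^ m * (1 - x^2) ^ (γ + 1/2) = 0 := by
      have e : (∫ x in (-1:ℝ)..1, (Dpol γ P).eval x * (X^m : Polynomial ℝ).eval x
            * (1 - x^2) ^ (γ + 1/2))
          = ∫ x in (-1:ℝ)..1, P.eval x * (Dpol γ (X^m : Polynomial ℝ)).eval x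
            * (1 - x^2) ^ (γ + 1/2) := ibp hγ P (X^m)
      have e2 : (Dpol γ (X^m : Polynomial ℝ)).natDegree < n :=
        lt_of_le_of_lt (le_trans (Dpol_natDegree_le γ _) (natDegree_X_pow_le m)) hm
      calc ∫ x in (-1:ℝ)..1, (Dpol γ P).eval x * x ^ m * (1 - x^2) ^ (γ + 1/2)
          = ∫ x in (-1:ℝ)..1, (Dpol γ P).eval x * (X^m : Polynomial ℝ).eval x
              * (1 - x^2) ^ (γ + 1/2) := by simp only [eval_pow, eval_X]
        _ = ∫ x in (-1:ℝ)..1, P.eval x * (Dpol γ (X^m : Polynomial ℝ)).eval x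
              * (1 - x^2) ^ (γ + 1/2) := e
        _ = 0 := ortho_poly_gen hγ P n hortho _ e2
    calc ∫ x in (-1:ℝ)..1, R.eval x * x ^ m * (1 - x^2) ^ (γ + 1/2)
        = ∫ x in (-1:ℝ)..1, ((Dpol γ P).eval x * x ^ m * (1 - x^2) ^ (γ + 1/2)
            + c * (P.eval x * x ^ m * (1 - x^2) ^ (γ + 1/2))) := by
          apply intervalIntegral.integral_congr
          intro x _
          simp only [hRdef, eval_add, eval_mul, eval_C]
          ring
      _ = (∫ x in (-1:ℝ)..1, (Dpol γ P).eval x * x ^ m * (1 - x^2) ^ (γ + 1/2))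
            + ∫ x in (-1:ℝ)..1, c * (P.eval x * x ^ m * (1 - x^2) ^ (γ + 1/2)) :=
          intervalIntegral.integral_add hi1 hi2
      _ = 0 := by
          rw [h1, intervalIntegral.integral_const_mul, hortho m hm]
          ring
  -- conclude R = 0
  by_cases hR0 : R = 0
  · exact hR0
  · exfalso
    have hdegR : R.natDegree < n := by
      by_contra hcon
      push_neg at hcon
      exact (Polynomial.leadingCoeff_ne_zero.mpr hR0) (hRcoeff R.natDegree hcon)
    have hself : ∫ x in (-1:ℝ)..1, R.eval x * R.eval x * (1 - x^2) ^ (γ + 1/2) = 0 :=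
      ortho_poly_gen hγ R n horthR R hdegR
    exact hR0 (poly_zero_of_selfint hγ R hself)

lemma ode_eval {γ : ℝ} (hγ : -1 < γ) {L : ℕ → Polynomial ℝ} (hL : IsMonicOrtho γ L)
    (n : ℕ) (x : ℝ) :
    (1 - x^2) * (L n).derivative.derivative.eval x - (2*γ+3) * x * (L n).derivative.eval x
      + (n:ℝ) * ((n:ℝ) + 2*γ + 2) * (L n).eval x = 0 := by
  have h := congrArg (Polynomial.eval x) (gegenbauer_ode hγ hL n)
  simp only [Dpol, eval_add, eval_mul, eval_sub, eval_one, eval_pow, eval_X, eval_C,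
    eval_zero] at h
  linear_combination h

lemma hasDerivAt_cexpIM (m c0 A : ℂ) (s t : ℝ) :
    HasDerivAt (fun b : ℝ => c0 * Complex.exp (Complex.I * m * ((b + s : ℝ) : ℂ)) * A)
      (Complex.I * m * (c0 * Complex.exp (Complex.I * m * ((t + s : ℝ) : ℂ)) * A)) t := by
  have h1 : HasDerivAt (fun w : ℂ => Complex.I * m * (w + (s:ℂ))) (Complex.I * m) ((t:ℝ):ℂ) := by
    simpa using ((hasDerivAt_id ((t:ℝ):ℂ)).add_const (s:ℂ)).const_mul (Complex.I * m)
  have h2 := ((h1.cexp.const_mul c0).mul_const A).comp_ofReal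
  simp only [Complex.ofReal_add]
  convert h2 using 1
  ring

lemma hasDerivAt_cexpIM' (m c0 : ℂ) (f : ℝ → ℝ) (g : ℝ) (s t : ℝ)
    (hf : HasDerivAt f g t) :
    HasDerivAt (fun a : ℝ => c0 * Complex.exp (Complex.I * m * ((s + a : ℝ) : ℂ)) * ((f a : ℝ) : ℂ))
      (Complex.I * m * (c0 * Complex.exp (Complex.I * m * ((s + t : ℝ) : ℂ)) * ((f t : ℝ):ℂ))
        + c0 * Complex.exp (Complex.I * m * ((s + t : ℝ) : ℂ)) * ((g : ℝ):ℂ)) t := by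
  have h0 : HasDerivAt (fun w : ℂ => Complex.I * m * ((s:ℂ) + w)) (Complex.I * m) ((t:ℝ):ℂ) := by
    simpa using ((hasDerivAt_id ((t:ℝ):ℂ)).const_add (s:ℂ)).const_mul (Complex.I * m)
  have h1 : HasDerivAt (fun w : ℂ => c0 * Complex.exp (Complex.I * m * ((s:ℂ) + w)))
      (Complex.I * m * (c0 * Complex.exp (Complex.I * m * ((s:ℂ) + ((t:ℝ):ℂ))))) ((t:ℝ):ℂ) := by
    have := h0.cexp.const_mul c0
    refine this.congr_deriv ?_
    ring
  have h2 := (h1.comp_ofReal).mul hf.ofReal_comp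
  simp only [Complex.ofReal_add]
  refine h2.congr_deriv ?_
  ring

lemma Tline_EF (m c0 : ℂ) (f : ℝ → ℝ) (g : ℝ) (β α : ℝ) (hf : HasDerivAt f g α) :
    Tline (fun q : ℝ × ℝ =>
        c0 * Complex.exp (Complex.I * m * ((q.1 + q.2 : ℝ) : ℂ)) * ((f q.2 : ℝ):ℂ)) (β, α)
      = -(c0 * Complex.exp (Complex.I * m * ((β + α : ℝ) : ℂ)) * ((g : ℝ):ℂ)) := by
  have hb := (hasDerivAt_cexpIM m c0 ((f α : ℝ):ℂ) α β).deriv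
  have ha := (hasDerivAt_cexpIM' m c0 f g β α hf).deriv
  simp only [Tline, dBeta, dAlpha]
  rw [hb, ha]
  ring

lemma dBeta_EF (m c0 : ℂ) (f : ℝ → ℝ) (β α : ℝ) :
    dBeta (fun q : ℝ × ℝ =>
        c0 * Complex.exp (Complex.I * m * ((q.1 + q.2 : ℝ) : ℂ)) * ((f q.2 : ℝ):ℂ)) (β, α)
      = Complex.I * m *
          (c0 * Complex.exp (Complex.I * m * ((β + α : ℝ) : ℂ)) * ((f α : ℝ):ℂ)) := by
  have hb := (hasDerivAt_cexpIM m c0 ((f α : ℝ):ℂ) α β).deriv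
  simp only [dBeta]
  rw [hb]

end ODEaux

noncomputable section

/-- On the interior of `∂₊S𝔻`, the functions `ψ_{n,k}^γ` satisfy the joint
eigenequations `𝓣_γ ψ_{n,k}^γ = (n+1+γ)² ψ_{n,k}^γ` and `(1/i) ∂_β ψ_{n,k}^γ = (n-2k) ψ_{n,k}^γ`. -/
theorem psi_joint_eigenfunctions (γ : ℝ) (hγ : -1 < γ)
    (L : ℕ → Polynomial ℝ) (hL : IsMonicOrtho γ L) (n : ℕ) (k : ℤ) :
    ∀ p : ℝ × ℝ, p.2 ∈ Set.Ioo (-(π / 2)) (π / 2) →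
      Tgam γ (psiF γ L n k) p = ((((n : ℝ) + 1 + γ) ^ 2 : ℝ) : ℂ) * psiF γ L n k p ∧
      Complex.I⁻¹ * dBeta (psiF γ L n k) p = ((n : ℂ) - 2 * (k : ℂ)) * psiF γ L n k p := by
  rintro ⟨β, α⟩ hα
  have hα' : α ∈ Set.Ioo (-(π/2)) (π/2) := hα
  have hcos : 0 < Real.cos α := Real.cos_pos_of_mem_Ioo hα'
  have hpsiEq : psiF γ L n k = fun q : ℝ × ℝ =>
      (((-1 : ℝ) ^ n / (2 * π) : ℝ) : ℂ) *
        Complex.exp (Complex.I * ((n : ℂ) - 2 * (k : ℂ)) * ((q.1 + q.2 : ℝ) : ℂ)) *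
        ((Real.cos q.2 ^ (2 * γ + 1) * (L n).eval (Real.sin q.2) : ℝ) : ℂ) := by
    funext q
    simp only [psiF, Complex.ofReal_mul]
    ring
  have hDu : ∀ a : ℝ, 0 < Real.cos a →
      HasDerivAt (fun a : ℝ => Real.cos a ^ (2 * γ + 1) * (L n).eval (Real.sin a))
        (-(Real.cos a ^ (2 * γ) *
          ((2*γ+1) * (Real.sin a * (L n).eval (Real.sin a))
            - Real.cos a ^ 2 * (L n).derivative.eval (Real.sin a)))) a := by
    intro a hca
    have h1 : HasDerivAt (fun a : ℝ => Real.cos a ^ (2 * γ + 1))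
        ((2*γ+1) * Real.cos a ^ (2*γ) * (-Real.sin a)) a := by
      have h := (Real.hasDerivAt_cos a).rpow_const (p := 2*γ+1) (Or.inl (ne_of_gt hca))
      rw [show 2*γ+1-1 = 2*γ by ring] at h
      convert h using 1
      ring
    have h2 : HasDerivAt (fun a : ℝ => (L n).eval (Real.sin a))
        ((L n).derivative.eval (Real.sin a) * Real.cos a) a :=
      ((L n).hasDerivAt (Real.sin a)).comp a (Real.hasDerivAt_sin a)
    have h3 := h1.mul h2
    refine h3.congr_deriv ?_
    rw [show Real.cos a ^ (2*γ+1) = Real.cos a ^ (2*γ) * Real.cos a by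
      rw [Real.rpow_add hca, Real.rpow_one]]
    ring
  have hdb : dBeta (psiF γ L n k) (β, α) = Complex.I * ((n : ℂ) - 2 * (k : ℂ)) *
      psiF γ L n k (β, α) := by
    rw [hpsiEq]
    exact dBeta_EF ((n:ℂ) - 2*(k:ℂ)) (((-1:ℝ)^n/(2*π) : ℝ):ℂ)
      (fun a => Real.cos a ^ (2*γ+1) * (L n).eval (Real.sin a)) β α
  constructor
  case right =>
    rw [hdb, show Complex.I⁻¹ * (Complex.I * ((n : ℂ) - 2 * (k : ℂ)) * psiF γ L n k (β, α))
        = (Complex.I⁻¹ * Complex.I) * (((n : ℂ) - 2 * (k : ℂ)) * psiF γ L n k (β, α)) by ring,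
      inv_mul_cancel₀ Complex.I_ne_zero, one_mul]
  case left =>
    have hTpsi : ∀ q : ℝ × ℝ, q.2 ∈ Set.Ioo (-(π/2)) (π/2) →
        muC (-(2 * γ)) q * Tline (psiF γ L n k) q
          = (((-1 : ℝ) ^ n / (2 * π) : ℝ) : ℂ) *
              Complex.exp (Complex.I * ((n : ℂ) - 2 * (k : ℂ)) * ((q.1 + q.2 : ℝ) : ℂ)) *
              (((2*γ+1) * (Real.sin q.2 * (L n).eval (Real.sin q.2))
                - Real.cos q.2 ^ 2 * (L n).derivative.eval (Real.sin q.2) : ℝ) : ℂ) := by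
      rintro ⟨β', α'⟩ hq
      have hcq : 0 < Real.cos α' := Real.cos_pos_of_mem_Ioo hq
      have hT := Tline_EF ((n:ℂ) - 2*(k:ℂ)) (((-1 : ℝ) ^ n / (2 * π) : ℝ) : ℂ)
        (fun a => Real.cos a ^ (2 * γ + 1) * (L n).eval (Real.sin a)) _ β' α' (hDu α' hcq)
      rw [hpsiEq, hT]
      have hcc : Real.cos α' ^ (-(2*γ)) * Real.cos α' ^ (2*γ) = 1 := by
        rw [← Real.rpow_add hcq]; norm_num
      simp only [muC, Complex.ofReal_neg, mul_neg, neg_neg, neg_mul]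
      rw [show (((Real.cos α' ^ (-(2*γ)) : ℝ)):ℂ) *
          ((((-1 : ℝ) ^ n / (2 * π) : ℝ) : ℂ) *
            Complex.exp (Complex.I * ((n : ℂ) - 2 * (k : ℂ)) * ((β' + α' : ℝ) : ℂ)) *
            ((Real.cos α' ^ (2*γ) *
              ((2*γ+1) * (Real.sin α' * (L n).eval (Real.sin α'))
                - Real.cos α' ^ 2 * (L n).derivative.eval (Real.sin α')) : ℝ) : ℂ))
          = ((((-1 : ℝ) ^ n / (2 * π) : ℝ) : ℂ) *
            Complex.exp (Complex.I * ((n : ℂ) - 2 * (k : ℂ)) * ((β' + α' : ℝ) : ℂ)) *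
            (((Real.cos α' ^ (-(2*γ)) : ℝ):ℂ) *
              ((Real.cos α' ^ (2*γ) *
              ((2*γ+1) * (Real.sin α' * (L n).eval (Real.sin α'))
                - Real.cos α' ^ 2 * (L n).derivative.eval (Real.sin α')) : ℝ) : ℂ))) by ring]
      congr 1
      rw [← Complex.ofReal_mul, ← mul_assoc, hcc, one_mul]
    have hwD : HasDerivAt (fun a : ℝ =>
          (2*γ+1) * (Real.sin a * (L n).eval (Real.sin a))
            - Real.cos a ^ 2 * (L n).derivative.eval (Real.sin a))
        ((2*γ+1) * (Real.cos α * (L n).eval (Real.sin α)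
            + Real.sin α * ((L n).derivative.eval (Real.sin α) * Real.cos α))
          - ((2 : ℕ) * Real.cos α ^ 1 * (-Real.sin α) * (L n).derivative.eval (Real.sin α)
            + Real.cos α ^ 2 * ((L n).derivative.derivative.eval (Real.sin α) * Real.cos α))) α := by
      have h2 : HasDerivAt (fun a : ℝ => (L n).eval (Real.sin a))
          ((L n).derivative.eval (Real.sin α) * Real.cos α) α :=
        ((L n).hasDerivAt (Real.sin α)).comp α (Real.hasDerivAt_sin α)
      have h2' : HasDerivAt (fun a : ℝ => (L n).derivative.eval (Real.sin a))
          ((L n).derivative.derivative.eval (Real.sin α) * Real.cos α) α :=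
        ((L n).derivative.hasDerivAt (Real.sin α)).comp α (Real.hasDerivAt_sin α)
      have t1 := ((Real.hasDerivAt_sin α).mul h2).const_mul (2*γ+1)
      have t2 := ((Real.hasDerivAt_cos α).pow 2).mul h2'
      exact t1.sub t2
    set w' : ℝ := (2*γ+1) * (Real.cos α * (L n).eval (Real.sin α)
            + Real.sin α * ((L n).derivative.eval (Real.sin α) * Real.cos α))
          - ((2 : ℕ) * Real.cos α ^ 1 * (-Real.sin α) * (L n).derivative.eval (Real.sin α)
            + Real.cos α ^ 2 * ((L n).derivative.derivative.eval (Real.sin α) * Real.cos α))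
      with hw'def
    have hGT := Tline_EF ((n:ℂ) - 2*(k:ℂ)) (((-1 : ℝ) ^ n / (2 * π) : ℝ) : ℂ)
      (fun a : ℝ => (2*γ+1) * (Real.sin a * (L n).eval (Real.sin a))
        - Real.cos a ^ 2 * (L n).derivative.eval (Real.sin a)) w' β α hwD
    have hfinal : Tline (fun q => muC (-(2 * γ)) q * Tline (psiF γ L n k) q) (β, α)
        = -((((-1 : ℝ) ^ n / (2 * π) : ℝ) : ℂ) *
            Complex.exp (Complex.I * ((n : ℂ) - 2 * (k : ℂ)) * ((β + α : ℝ) : ℂ)) *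
            ((w' : ℝ) : ℂ)) := by
      have hTT : Tline (fun q => muC (-(2 * γ)) q * Tline (psiF γ L n k) q) (β, α)
          = Tline (fun q : ℝ × ℝ => (((-1 : ℝ) ^ n / (2 * π) : ℝ) : ℂ) *
              Complex.exp (Complex.I * ((n : ℂ) - 2 * (k : ℂ)) * ((q.1 + q.2 : ℝ) : ℂ)) *
              (((2*γ+1) * (Real.sin q.2 * (L n).eval (Real.sin q.2))
                - Real.cos q.2 ^ 2 * (L n).derivative.eval (Real.sin q.2) : ℝ) : ℂ)) (β, α) := by
        simp only [Tline, dBeta, dAlpha]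
        congr 1
        · congr 1
          funext b
          exact hTpsi (b, α) hα'
        · exact Filter.EventuallyEq.deriv_eq (Filter.eventuallyEq_of_mem
            (Ioo_mem_nhds hα'.1 hα'.2) fun a ha => hTpsi (β, a) ha)
      rw [hTT]
      exact hGT
    -- the real eigen-identity
    have hode := ode_eval hγ hL n (Real.sin α)
    have hpyth := Real.sin_sq_add_cos_sq α
    have hsplit : Real.cos α ^ (2*γ+1) = Real.cos α ^ (2*γ) * Real.cos α := by
      rw [Real.rpow_add hcos, Real.rpow_one]
    have hreal : Real.cos α ^ (2*γ) * w' +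
        γ^2 * (Real.cos α ^ (2*γ+1) * (L n).eval (Real.sin α))
        = ((n:ℝ)+1+γ)^2 * (Real.cos α ^ (2*γ+1) * (L n).eval (Real.sin α)) := by
      rw [hsplit, hw'def]
      push_cast
      linear_combination (-(Real.cos α * Real.cos α ^ (2*γ))) * hode +
        (-(Real.cos α * Real.cos α ^ (2*γ) *
          (L n).derivative.derivative.eval (Real.sin α))) * hpyth
    have hC := congrArg (fun r : ℝ => (r : ℂ)) hreal
    push_cast at hC
    simp only [Tgam]
    rw [hfinal, hpsiEq]
    simp only [muC, Complex.ofReal_mul, Complex.ofReal_pow, Complex.ofReal_add,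
      Complex.ofReal_div, Complex.ofReal_neg, Complex.ofReal_one, Complex.ofReal_ofNat,
      Complex.ofReal_natCast]
    linear_combination (((-1:ℂ)) ^ n / (2 * (π:ℂ)) *
      Complex.exp (Complex.I * ((n : ℂ) - 2 * (k : ℂ)) * ((β:ℂ) + (α:ℂ)))) * hC


end
end

section
/- Fix γ > −1. For every n ≥ 0 and every k ∈ ℤ, the function I₀^♯(μ^{−2γ−1}ψ_{n,k}^γ)(z) = (1/2π)∫₀^{2π} e^{i(n−2k)θ} L_n^γ(−ρ sin(θ−ω)) dθ (z = ρe^{iω} ∈ 𝔻) vanishes identically on 𝔻 if and only if k < 0 or k > n. -/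
open MeasureTheory Complex Metric Real Set

noncomputable section



lemma intExp (r : ℤ) : (∫ θ in (0:ℝ)..(2*π), Complex.exp (Complex.I * r * θ))
    = if r = 0 then ((2*π:ℝ):ℂ) else 0 := by
  rcases eq_or_ne r 0 with h | h
  · simp [h, Complex.real_smul]
  · rw [if_neg h]
    have hc : (Complex.I * (r:ℂ)) ≠ 0 := by
      simp [Complex.I_ne_zero, Complex.ofReal_ne_zero, h]
    have h1 : (∫ θ in (0:ℝ)..(2*π), Complex.exp (Complex.I * r * θ))
        = (Complex.exp (Complex.I * r * ((2*π:ℝ):ℂ)) - Complex.exp (Complex.I * r * ((0:ℝ):ℂ))) / (Complex.I * r) := by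
      simpa [mul_assoc] using integral_exp_mul_complex (a := 0) (b := 2*π) hc
    have h2 : Complex.exp (Complex.I * r * ((2*π:ℝ):ℂ)) = 1 := by
      rw [show Complex.I * (r:ℂ) * ((2*π:ℝ):ℂ) = (r:ℂ) * (2*(π:ℂ)*Complex.I) by push_cast; ring]
      exact Complex.exp_int_mul_two_pi_mul_I r
    rw [h1, h2]; simp

lemma expPowInt (c₁ c₂ : ℂ) (m : ℤ) (j : ℕ) :
    (∫ θ in (0:ℝ)..(2*π), Complex.exp (Complex.I * m * θ) *
      (c₁ * Complex.exp ((θ:ℂ) * Complex.I) + c₂ * Complex.exp (-(θ:ℂ) * Complex.I))^j)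
    = ∑ l ∈ Finset.range (j+1), (j.choose l : ℂ) * c₁^l * c₂^(j-l) *
        (if m + 2*l - j = 0 then ((2*π:ℝ):ℂ) else 0) := by
  have hpt : ∀ θ : ℝ, Complex.exp (Complex.I * m * θ) *
      (c₁ * Complex.exp ((θ:ℂ) * Complex.I) + c₂ * Complex.exp (-(θ:ℂ) * Complex.I))^j
      = ∑ l ∈ Finset.range (j+1), ((j.choose l : ℂ) * c₁^l * c₂^(j-l)) *
          Complex.exp (Complex.I * ((m + 2*l - j : ℤ) : ℂ) * θ) := by
    intro θ
    rw [add_pow, Finset.mul_sum]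
    refine Finset.sum_congr rfl fun l hl => ?_
    have hl' : l ≤ j := Nat.lt_succ_iff.mp (Finset.mem_range.mp hl)
    rw [mul_pow, mul_pow, ← Complex.exp_nat_mul, ← Complex.exp_nat_mul]
    rw [show Complex.exp (Complex.I * m * θ) * (c₁ ^ l * Complex.exp ((l:ℂ) * ((θ:ℂ) * Complex.I)) *
        (c₂ ^ (j-l) * Complex.exp (((j-l : ℕ):ℂ) * (-(θ:ℂ) * Complex.I))) * (j.choose l : ℂ))
      = ((j.choose l : ℂ) * c₁^l * c₂^(j-l)) * (Complex.exp (Complex.I * m * θ) *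
          Complex.exp ((l:ℂ) * ((θ:ℂ) * Complex.I)) * Complex.exp (((j-l : ℕ):ℂ) * (-(θ:ℂ) * Complex.I))) by ring]
    rw [← Complex.exp_add, ← Complex.exp_add]
    congr 1
    push_cast [Nat.cast_sub hl']
    ring
  rw [intervalIntegral.integral_congr fun θ _ => hpt θ]
  rw [intervalIntegral.integral_finset_sum (fun l _ => (Continuous.intervalIntegrable (by fun_prop) _ _))]
  refine Finset.sum_congr rfl fun l hl => ?_
  rw [intervalIntegral.integral_const_mul, intExp]

lemma imEq (z : ℂ) (θ : ℝ) :
    (z * Complex.exp (-(θ:ℂ) * Complex.I)).im = -‖z‖ * Real.sin (θ - z.arg) := by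
  rcases eq_or_ne z 0 with rfl | hz
  · simp
  · have habs : ‖z‖ ≠ 0 := by simpa [norm_ne_zero_iff] using hz
    have he : Complex.exp (-(θ:ℂ) * Complex.I) = (Real.cos θ : ℂ) - (Real.sin θ : ℂ) * Complex.I := by
      rw [show (-(θ:ℂ) * Complex.I) = (-(θ:ℂ)) * Complex.I by ring,
        Complex.exp_mul_I, Complex.cos_neg, Complex.sin_neg, ← Complex.ofReal_cos,
        ← Complex.ofReal_sin]
      ring
    rw [he, Real.sin_sub]
    have h1 : Real.sin z.arg = z.im / ‖z‖ := Complex.sin_arg z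
    have h2 : Real.cos z.arg = z.re / ‖z‖ := Complex.cos_arg hz
    have h3 : ‖z‖ = ‖z‖ := rfl
    simp [Complex.mul_im, Complex.sub_re, Complex.sub_im, Complex.mul_re, h1, h2, h3,
      Complex.sin_ofReal_re, Complex.cos_ofReal_re]
    field_simp
    ring

lemma sinDecomp (z : ℂ) (θ : ℝ) :
    ((-‖z‖ * Real.sin (θ - z.arg) : ℝ) : ℂ)
      = (-((starRingEnd ℂ) z) / (2*Complex.I)) * Complex.exp ((θ:ℂ) * Complex.I)
        + (z / (2*Complex.I)) * Complex.exp (-(θ:ℂ) * Complex.I) := by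
  have him : ((-‖z‖ * Real.sin (θ - z.arg) : ℝ) : ℂ)
      = (((z * Complex.exp (-(θ:ℂ) * Complex.I)).im : ℝ) : ℂ) := by rw [imEq]
  rw [him]
  have hw := Complex.sub_conj (z * Complex.exp (-(θ:ℂ) * Complex.I))
  have hconj : (starRingEnd ℂ) (z * Complex.exp (-(θ:ℂ) * Complex.I))
      = (starRingEnd ℂ) z * Complex.exp ((θ:ℂ) * Complex.I) := by
    rw [map_mul, ← Complex.exp_conj]
    congr 1
    simp [Complex.conj_I, Complex.conj_ofReal]
  rw [hconj] at hw
  have hI : (2*Complex.I) ≠ 0 := by simp [Complex.I_ne_zero]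
  rw [Complex.ofReal_mul, Complex.ofReal_ofNat] at hw
  rw [show (((z * Complex.exp (-(θ:ℂ) * Complex.I)).im : ℝ) : ℂ)
      = (z * Complex.exp (-(θ:ℂ) * Complex.I)
          - (starRingEnd ℂ) z * Complex.exp ((θ:ℂ) * Complex.I)) / (2*Complex.I) by
    rw [eq_div_iff hI]; linear_combination -hw]
  ring

lemma mainIntegral (P : Polynomial ℝ) (N : ℕ) (hN : P.natDegree ≤ N) (z : ℂ) (m : ℤ) :
    (∫ θ in (0:ℝ)..(2*π), Complex.exp (Complex.I * m * θ) *
        ((P.eval (-‖z‖ * Real.sin (θ - z.arg)) : ℝ) : ℂ))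
    = ∑ j ∈ Finset.range (N+1), (P.coeff j : ℂ) *
        ∑ l ∈ Finset.range (j+1), (j.choose l : ℂ) * (-((starRingEnd ℂ) z) / (2*Complex.I))^l *
          (z / (2*Complex.I))^(j-l) * (if m + 2*l - j = 0 then ((2*π:ℝ):ℂ) else 0) := by
  have hpt : ∀ θ : ℝ, Complex.exp (Complex.I * m * θ) *
        ((P.eval (-‖z‖ * Real.sin (θ - z.arg)) : ℝ) : ℂ)
      = ∑ j ∈ Finset.range (N+1), (P.coeff j : ℂ) *
          (Complex.exp (Complex.I * m * θ) *
            ((-((starRingEnd ℂ) z) / (2*Complex.I)) * Complex.exp ((θ:ℂ)*Complex.I)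
              + (z / (2*Complex.I)) * Complex.exp (-(θ:ℂ)*Complex.I))^j) := by
    intro θ
    have he : ((P.eval (-‖z‖ * Real.sin (θ - z.arg)) : ℝ) : ℂ)
        = ∑ j ∈ Finset.range (N+1), (P.coeff j : ℂ)
            * (((-‖z‖ * Real.sin (θ - z.arg) : ℝ)):ℂ)^j := by
      rw [Polynomial.eval_eq_sum_range' (Nat.lt_succ_of_le hN)]
      push_cast
      rfl
    rw [he, Finset.mul_sum]
    refine Finset.sum_congr rfl fun j _ => ?_
    rw [sinDecomp]
    ring
  rw [intervalIntegral.integral_congr fun θ _ => hpt θ,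
    intervalIntegral.integral_finset_sum
      (fun j _ => (Continuous.intervalIntegrable (by fun_prop) _ _))]
  refine Finset.sum_congr rfl fun j _ => ?_
  rw [intervalIntegral.integral_const_mul, expPowInt]

lemma BPWpt (γ : ℝ) (L : ℕ → Polynomial ℝ) (n : ℕ) (k : ℤ) (z : ℂ) (hz1 : ‖z‖ ≤ 1) (θ : ℝ)
    (hcos : Real.cos (θ - z.arg) ≠ 0) :
    ((Real.cos (alpham z θ) ^ (-(2*γ) - 1) : ℝ) : ℂ) * psiF γ L n k (wrap (betam z θ), alpham z θ)
    = ((1/(2*π) : ℝ) : ℂ) * (Complex.exp (Complex.I * ((n:ℂ) - 2*(k:ℂ)) * (θ:ℂ)) *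
        (((L n).eval (-‖z‖ * Real.sin (θ - z.arg)) : ℝ) : ℂ)) := by
  set s := (z * Complex.exp (-(θ:ℂ) * Complex.I)).im with hsdef
  have hs1 : s = -‖z‖ * Real.sin (θ - z.arg) := imEq z θ
  have hs2 : |s| ≤ 1 := by
    have h1 : |s| ≤ ‖z * Complex.exp (-(θ:ℂ) * Complex.I)‖ :=
      Complex.abs_im_le_norm _
    have h2 : ‖Complex.exp (-(θ:ℂ) * Complex.I)‖ = 1 := by
      rw [Complex.norm_exp]
      simp
    rw [norm_mul, h2, mul_one] at h1
    exact h1.trans hz1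
  have hcaa : Real.cos (alpham z θ) = Real.sqrt (1 - s^2) := by
    rw [alpham, ← hsdef, Real.cos_arcsin]
  have hpos : 0 < Real.cos (alpham z θ) := by
    rw [hcaa]
    rcases (Real.sqrt_nonneg (1 - s^2)).lt_or_eq with h | h
    · exact h
    · exfalso
      have h1 : 1 - s^2 ≤ 0 := Real.sqrt_eq_zero'.mp h.symm
      have ht := Real.sin_sq_add_cos_sq (θ - z.arg)
      have hc2 : 0 < Real.cos (θ - z.arg)^2 :=
        lt_of_le_of_ne (sq_nonneg _) (Ne.symm (pow_ne_zero 2 hcos))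
      have hzn : (0:ℝ) ≤ ‖z‖ := norm_nonneg z
      have hss : s^2 = ‖z‖^2 * Real.sin (θ - z.arg)^2 := by rw [hs1]; ring
      have hz2 : ‖z‖^2 ≤ 1 := by nlinarith
      nlinarith [mul_nonneg (sub_nonneg.mpr hz2) (sq_nonneg (Real.sin (θ - z.arg)))]
  have hpow : Real.cos (alpham z θ) ^ (-(2*γ) - 1) * Real.cos (alpham z θ) ^ (2*γ + 1) = 1 := by
    rw [← Real.rpow_add hpos, show (-(2*γ) - 1) + (2*γ + 1) = 0 by ring, Real.rpow_zero]
  set M : ℤ := (n:ℤ) - 2*k with hMdef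
  have hM : ((n:ℂ) - 2*(k:ℂ)) = (M:ℂ) := by rw [hMdef]; push_cast; ring
  set d : ℤ := toIocDiv Real.two_pi_pos 0 (betam z θ) with hddef
  have hsum : wrap (betam z θ) + alpham z θ = θ - π - d*(2*π) := by
    rw [wrap, toIocMod, ← hddef, zsmul_eq_mul, betam]
    ring
  have hexp : Complex.exp (Complex.I * ((n:ℂ) - 2*(k:ℂ)) * ((wrap (betam z θ) + alpham z θ : ℝ) : ℂ))
      = Complex.exp (Complex.I * (M:ℂ) * (θ:ℂ)) * ((-1:ℂ))^(-M) := by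
    rw [hM, hsum]
    rw [show Complex.I * (M:ℂ) * ((θ - π - d*(2*π) : ℝ):ℂ)
        = Complex.I * (M:ℂ) * (θ:ℂ) + (((-M : ℤ):ℂ) * (((π:ℝ):ℂ) * Complex.I)
          + ((-(M*d) : ℤ):ℂ) * (2*((π:ℝ):ℂ)*Complex.I)) by push_cast; ring]
    rw [Complex.exp_add, Complex.exp_add, Complex.exp_int_mul, Complex.exp_int_mul_two_pi_mul_I,
      Complex.exp_pi_mul_I, mul_one]
  have hsign : ((-1:ℂ))^(-M) * ((((-1:ℝ))^n / (2*π) : ℝ) : ℂ) = ((1/(2*π):ℝ):ℂ) := by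
    have h1 : ((-1:ℂ))^(-M) * ((-1:ℂ))^(n:ℤ) = 1 := by
      rw [← zpow_add₀ (by norm_num : (-1:ℂ) ≠ 0),
        show -M + (n:ℤ) = 2*k by rw [hMdef]; ring, zpow_mul]
      norm_num
    push_cast
    rw [zpow_natCast] at h1
    linear_combination (1/(2*(π:ℂ))) * h1
  have hsin : Real.sin (alpham z θ) = -‖z‖ * Real.sin (θ - z.arg) := by
    rw [alpham, ← hsdef, Real.sin_arcsin (abs_le.mp hs2).1 (abs_le.mp hs2).2, hs1]
  rw [psiF]
  simp only
  rw [hexp, hsin]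
  calc ((Real.cos (alpham z θ) ^ (-(2*γ) - 1) : ℝ) : ℂ) *
        (((Real.cos (alpham z θ) ^ (2 * γ + 1) : ℝ) : ℂ) * (((-1 : ℝ) ^ n / (2 * π) : ℝ) : ℂ) *
          (Complex.exp (Complex.I * (M:ℂ) * (θ:ℂ)) * ((-1:ℂ))^(-M)) *
          (((L n).eval (-‖z‖ * Real.sin (θ - z.arg)) : ℝ) : ℂ))
      = (((Real.cos (alpham z θ) ^ (-(2*γ) - 1) : ℝ) : ℂ) * ((Real.cos (alpham z θ) ^ (2 * γ + 1) : ℝ) : ℂ))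
        * (((-1:ℂ))^(-M) * (((-1 : ℝ) ^ n / (2 * π) : ℝ) : ℂ))
        * (Complex.exp (Complex.I * (M:ℂ) * (θ:ℂ)) *
            (((L n).eval (-‖z‖ * Real.sin (θ - z.arg)) : ℝ) : ℂ)) := by ring
    _ = ((1/(2*π) : ℝ) : ℂ) * (Complex.exp (Complex.I * ((n:ℂ) - 2*(k:ℂ)) * (θ:ℂ)) *
          (((L n).eval (-‖z‖ * Real.sin (θ - z.arg)) : ℝ) : ℂ)) := by
      rw [← Complex.ofReal_mul, hpow, Complex.ofReal_one, one_mul, hsign, hM]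

/-- The backprojected functions
`I₀^♯(μ^{-2γ-1} ψ_{n,k}^γ)(z) = (1/2π) ∫₀^{2π} e^{i(n-2k)θ} L_n^γ(-ρ sin(θ-ω)) dθ` (`z = ρe^{iω}`)
vanish identically on `𝔻` if and only if `k < 0` or `k > n`. -/
theorem backprojected_psi_vanishes_iff (γ : ℝ) (hγ : -1 < γ)
    (L : ℕ → Polynomial ℝ) (hL : IsMonicOrtho γ L) (n : ℕ) (k : ℤ) :
    (∀ z ∈ Metric.closedBall (0 : ℂ) 1,
      BPW γ (psiF γ L n k) z
        = ((1 / (2 * π) : ℝ) : ℂ) * ∫ θ in (0:ℝ)..(2 * π),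
            Complex.exp (Complex.I * ((n : ℂ) - 2 * (k : ℂ)) * (θ : ℂ)) *
              (((L n).eval (-‖z‖ * Real.sin (θ - z.arg)) : ℝ) : ℂ)) ∧
    ((∀ z ∈ Metric.closedBall (0 : ℂ) 1, BPW γ (psiF γ L n k) z = 0) ↔
      (k < 0 ∨ (n : ℤ) < k)) := by
  have hdeg : (L n).natDegree = n := (hL n).2.1
  set M : ℤ := (n:ℤ) - 2*k with hMdef
  have hMC : ((n:ℂ) - 2*(k:ℂ)) = (M:ℂ) := by rw [hMdef]; push_cast; ring
  have part1 : ∀ z ∈ Metric.closedBall (0:ℂ) 1,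
      BPW γ (psiF γ L n k) z
        = ((1 / (2 * π) : ℝ) : ℂ) * ∫ θ in (0:ℝ)..(2 * π),
            Complex.exp (Complex.I * ((n : ℂ) - 2 * (k : ℂ)) * (θ : ℂ)) *
              (((L n).eval (-‖z‖ * Real.sin (θ - z.arg)) : ℝ) : ℂ) := by
    intro z hz
    have hz1 : ‖z‖ ≤ 1 := mem_closedBall_zero_iff.mp hz
    have hstep : BPW γ (psiF γ L n k) z
        = ∫ θ in (0:ℝ)..(2*π), ((Real.cos (alpham z θ) ^ (-(2 * γ) - 1) : ℝ) : ℂ) *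
            psiF γ L n k (wrap (betam z θ), alpham z θ) := rfl
    rw [hstep]
    have hS : (volume : Measure ℝ) {θ : ℝ | Real.cos (θ - z.arg) = 0} = 0 := by
      have hsub : {θ : ℝ | Real.cos (θ - z.arg) = 0} ⊆
          Set.range (fun j : ℤ => z.arg + (2*(j:ℝ)+1) * π / 2) := by
        intro θ hθ
        obtain ⟨j, hj⟩ := Real.cos_eq_zero_iff.mp hθ
        exact ⟨j, by linarith⟩
      exact measure_mono_null hsub ((Set.countable_range _).measure_zero _)
    have hne : ∀ᵐ θ : ℝ, Real.cos (θ - z.arg) ≠ 0 := by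
      rw [MeasureTheory.ae_iff]
      simpa [not_not] using hS
    have hae : ∀ᵐ θ : ℝ, θ ∈ Set.uIoc (0:ℝ) (2*π) →
        ((Real.cos (alpham z θ) ^ (-(2 * γ) - 1) : ℝ) : ℂ) *
            psiF γ L n k (wrap (betam z θ), alpham z θ)
          = ((1/(2*π) : ℝ) : ℂ) * (Complex.exp (Complex.I * ((n:ℂ) - 2*(k:ℂ)) * (θ:ℂ)) *
              (((L n).eval (-‖z‖ * Real.sin (θ - z.arg)) : ℝ) : ℂ)) := by
      filter_upwards [hne] with θ hθ _
      exact BPWpt γ L n k z hz1 θ hθ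
    rw [intervalIntegral.integral_congr_ae hae, intervalIntegral.integral_const_mul]
  refine ⟨part1, ?_⟩
  constructor
  · intro hall
    by_contra hcon
    push_neg at hcon
    obtain ⟨hk0, hkn⟩ := hcon
    obtain ⟨k', rfl⟩ : ∃ k' : ℕ, (k' : ℤ) = k := ⟨k.toNat, Int.toNat_of_nonneg hk0⟩
    have hk'n : k' ≤ n := by exact_mod_cast hkn
    set A : ℕ → ℂ := fun j => ((L n).coeff j : ℂ) * ((1/(2*Complex.I))^j *
      ∑ l ∈ Finset.range (j+1), (j.choose l : ℂ) * (-1)^l *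
        (if M + 2*l - j = 0 then ((2*π:ℝ):ℂ) else 0)) with hAdef
    set Q : Polynomial ℂ := ∑ j ∈ Finset.range (n+1), Polynomial.C (A j) * Polynomial.X ^ j
      with hQdef
    have h2I : (2*Complex.I) ≠ 0 := by simp [Complex.I_ne_zero]
    have hQeval : ∀ x : ℝ, x ∈ Set.Ioo (0:ℝ) 1 → Q.eval ((x:ℝ):ℂ) = 0 := by
      intro x hx
      have hx0 : (0:ℝ) ≤ x := le_of_lt hx.1
      have hx1 : ‖((x:ℝ):ℂ)‖ ≤ 1 := by
        rw [Complex.norm_real]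
        rw [Real.norm_eq_abs, _root_.abs_of_nonneg hx0]
        exact le_of_lt hx.2
      have hmem : ((x:ℝ):ℂ) ∈ Metric.closedBall (0:ℂ) 1 := mem_closedBall_zero_iff.mpr hx1
      have h0 := hall _ hmem
      rw [part1 _ hmem] at h0
      simp only [hMC] at h0
      rw [mainIntegral (L n) n (le_of_eq hdeg) ((x:ℝ):ℂ) M] at h0
      simp only [Complex.conj_ofReal] at h0
      have h2π : ((1/(2*π):ℝ):ℂ) ≠ 0 := by
        rw [Complex.ofReal_ne_zero]
        positivity
      have hsum0 := (mul_eq_zero.mp h0).resolve_left h2π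
      rw [hQdef, Polynomial.eval_finset_sum]
      simp only [Polynomial.eval_mul, Polynomial.eval_C, Polynomial.eval_pow, Polynomial.eval_X]
      rw [← hsum0]
      refine Finset.sum_congr rfl fun j hj => ?_
      have hx2I : ∀ l : ℕ, l ≤ j → (-((x:ℝ):ℂ)/(2*Complex.I))^l * (((x:ℝ):ℂ)/(2*Complex.I))^(j-l)
          = (-1:ℂ)^l * ((1/(2*Complex.I))^j * ((x:ℝ):ℂ)^j) := by
        intro l hl
        have h1 : (((x:ℝ):ℂ) * (1/(2*Complex.I)))^l * (((x:ℝ):ℂ) * (1/(2*Complex.I)))^(j-l)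
            = (((x:ℝ):ℂ) * (1/(2*Complex.I)))^j := by
          rw [← pow_add, Nat.add_sub_cancel' hl]
        calc (-((x:ℝ):ℂ)/(2*Complex.I))^l * (((x:ℝ):ℂ)/(2*Complex.I))^(j-l)
            = (-1:ℂ)^l * ((((x:ℝ):ℂ) * (1/(2*Complex.I)))^l *
                (((x:ℝ):ℂ) * (1/(2*Complex.I)))^(j-l)) := by
              rw [show -((x:ℝ):ℂ)/(2*Complex.I) = (-1) * (((x:ℝ):ℂ) * (1/(2*Complex.I))) by ring,
                show ((x:ℝ):ℂ)/(2*Complex.I) = ((x:ℝ):ℂ) * (1/(2*Complex.I)) by ring, mul_pow]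
              ring
          _ = (-1:ℂ)^l * ((1/(2*Complex.I))^j * ((x:ℝ):ℂ)^j) := by rw [h1, mul_pow]; ring
      rw [hAdef]
      simp only [Finset.mul_sum, Finset.sum_mul]
      refine Finset.sum_congr rfl fun l hl => ?_
      have hl' : l ≤ j := Nat.lt_succ_iff.mp (Finset.mem_range.mp hl)
      have := hx2I l hl'
      linear_combination (-((L n).coeff j : ℂ) * (j.choose l : ℂ) *
        (if M + 2*(l:ℤ) - (j:ℤ) = 0 then ((2*π:ℝ):ℂ) else 0)) * this
    have hQ0 : Q = 0 := by
      refine Polynomial.eq_zero_of_infinite_isRoot Q ?_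
      refine Set.Infinite.mono ?_
        (Set.Infinite.image (Set.injOn_of_injective Complex.ofReal_injective)
          (Set.Ioo_infinite (by norm_num : (0:ℝ) < 1)))
      rintro _ ⟨x, hx, rfl⟩
      exact hQeval x hx
    have hcn : Q.coeff n = A n := by
      rw [hQdef, Polynomial.finset_sum_coeff]
      simp only [Polynomial.coeff_C_mul, Polynomial.coeff_X_pow, mul_ite, mul_one, mul_zero]
      rw [Finset.sum_ite_eq]
      simp [Finset.mem_range]
    have hAn : A n ≠ 0 := by
      rw [hAdef]
      simp only
      have hcoef : (L n).coeff n = 1 := by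
        have h1 := (hL n).1.coeff_natDegree
        rw [hdeg] at h1
        exact h1
      have hBsum : (∑ l ∈ Finset.range (n+1), ((n.choose l : ℂ)) * (-1:ℂ)^l *
            (if M + 2*l - n = 0 then ((2*π:ℝ):ℂ) else 0))
          = (n.choose k' : ℂ) * (-1:ℂ)^k' * ((2*π:ℝ):ℂ) := by
        rw [Finset.sum_eq_single_of_mem k' (Finset.mem_range.mpr (Nat.lt_succ_of_le hk'n))]
        · rw [if_pos (by omega)]
        · intro l hl hne
          rw [if_neg (by omega), mul_zero]
      rw [hBsum, hcoef]
      refine mul_ne_zero (by norm_num) (mul_ne_zero (pow_ne_zero _ (one_div_ne_zero h2I)) ?_)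
      refine mul_ne_zero (mul_ne_zero ?_ (pow_ne_zero _ (by norm_num))) ?_
      · exact_mod_cast (Nat.choose_pos hk'n).ne'
      · rw [Complex.ofReal_ne_zero]
        positivity
    rw [hQ0, Polynomial.coeff_zero] at hcn
    exact hAn hcn.symm
  · intro hd z hz
    rw [part1 z hz]
    simp only [hMC]
    rw [mainIntegral (L n) n (le_of_eq hdeg) z M]
    rw [Finset.sum_eq_zero, mul_zero]
    intro j hj
    rw [Finset.sum_eq_zero, mul_zero]
    intro l hl
    have hj' : j ≤ n := Nat.lt_succ_iff.mp (Finset.mem_range.mp hj)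
    have hl' : l ≤ j := Nat.lt_succ_iff.mp (Finset.mem_range.mp hl)
    rw [if_neg (by omega), mul_zero]


end
end

section
/- Fix γ > −1. There exist constants C₁, C₂ > 0 (depending on γ) such that for all n ≥ 0 and 0 ≤ k ≤ n: C₁(n+1)^{min(−1, −1−γ)} ≤ (σ_{n,k}^γ)² ≤ C₂(n+1)^{max(−1, −1−γ)}. -/
open MeasureTheory Complex Metric Real Set

noncomputable section


open Filter Topology in
private lemma sigAux_gammaProd (s : ℝ) (hs : 0 < s) (n : ℕ) :
    Real.Gamma (s + n + 1) = Real.Gamma s * ∏ j ∈ Finset.range (n + 1), (s + j) := by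
  induction n with
  | zero => simp [Real.Gamma_add_one hs.ne', mul_comm]
  | succ n ih =>
      have h1 : s + ((n + 1 : ℕ) : ℝ) + 1 = (s + n + 1) + 1 := by push_cast; ring
      have h2 : (0 : ℝ) < s + n + 1 := by positivity
      rw [Finset.prod_range_succ, h1, Real.Gamma_add_one h2.ne', ih]
      push_cast; ring

open Filter Topology in
private lemma sigAux_ratio (δ : ℝ) (hδ : -1 < δ) :
    ∃ c₁ c₂ : ℝ, 0 < c₁ ∧ 0 < c₂ ∧ ∀ m : ℕ,
      c₁ * ((m : ℝ) + 1) ^ δ ≤ Real.Gamma ((m : ℝ) + δ + 1) / (m.factorial : ℝ) ∧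
      Real.Gamma ((m : ℝ) + δ + 1) / (m.factorial : ℝ) ≤ c₂ * ((m : ℝ) + 1) ^ δ := by
  have hs : (0 : ℝ) < δ + 1 := by linarith
  set s : ℝ := δ + 1 with hs_def
  set q : ℕ → ℝ := fun m =>
    Real.Gamma ((m : ℝ) + δ + 1) / ((m.factorial : ℝ) * ((m : ℝ) + 1) ^ δ) with hq_def
  have hGpos : ∀ m : ℕ, 0 < Real.Gamma ((m : ℝ) + δ + 1) := by
    intro m
    apply Real.Gamma_pos_of_pos
    have h0 : (0 : ℝ) ≤ m := Nat.cast_nonneg m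
    linarith
  have hqpos : ∀ m, 0 < q m := by
    intro m
    apply div_pos (hGpos m)
    have : (0 : ℝ) < m.factorial := by exact_mod_cast m.factorial_pos
    positivity
  have key : Tendsto q atTop (𝓝 1) := by
    rw [← tendsto_add_atTop_iff_nat 1]
    have hGs : Real.Gamma s ≠ 0 := (Real.Gamma_pos_of_pos hs).ne'
    set r : ℕ → ℝ := fun n => Real.Gamma s / Real.GammaSeq s n *
      (((n : ℝ) / ((n : ℝ) + 1)) * (((n : ℝ) / ((n : ℝ) + 2)) ^ δ)) with hr_def
    have hG : Tendsto (fun n => Real.Gamma s / Real.GammaSeq s n) atTop (𝓝 1) := by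
      have h := Filter.Tendsto.div
        (tendsto_const_nhds : Tendsto (fun _ : ℕ => Real.Gamma s) atTop (𝓝 (Real.Gamma s)))
        (Real.GammaSeq_tendsto_Gamma s) hGs
      rw [div_self hGs] at h
      exact h
    have t1 : Tendsto (fun n : ℕ => (n : ℝ) / ((n : ℝ) + 1)) atTop (𝓝 1) :=
      tendsto_natCast_div_add_atTop (1 : ℝ)
    have t2 : Tendsto (fun n : ℕ => ((n : ℝ) / ((n : ℝ) + 2)) ^ δ) atTop (𝓝 1) := by
      have t0 : Tendsto (fun n : ℕ => (n : ℝ) / ((n : ℝ) + 2)) atTop (𝓝 1) :=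
        tendsto_natCast_div_add_atTop (2 : ℝ)
      have hc : ContinuousAt (fun x : ℝ => x ^ δ) 1 :=
        Real.continuousAt_rpow_const 1 δ (Or.inl one_ne_zero)
      have := hc.tendsto.comp t0
      rw [Real.one_rpow] at this
      exact this
    have hr : Tendsto r atTop (𝓝 1) := by
      have := hG.mul (t1.mul t2)
      simpa [hr_def, Real.one_rpow] using this
    have heq : r =ᶠ[atTop] fun n => q (n + 1) := by
      filter_upwards [eventually_ge_atTop 1] with n hn
      have hn0 : (0 : ℝ) < n := by exact_mod_cast hn
      have hprod : (0 : ℝ) < ∏ j ∈ Finset.range (n + 1), (s + j) := by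
        apply Finset.prod_pos
        intro j _
        have : (0 : ℝ) ≤ j := Nat.cast_nonneg j
        linarith
      have hGseq : Real.GammaSeq s n =
          (n : ℝ) ^ s * n.factorial / ∏ j ∈ Finset.range (n + 1), (s + j) := rfl
      have hGn : Real.Gamma (((n + 1 : ℕ) : ℝ) + δ + 1) =
          Real.Gamma s * ∏ j ∈ Finset.range (n + 1), (s + j) := by
        rw [← sigAux_gammaProd s hs n]
        congr 1
        simp only [hs_def]; push_cast; ring
      have hns : (n : ℝ) ^ s = (n : ℝ) ^ δ * n := by
        rw [hs_def, Real.rpow_add hn0, Real.rpow_one]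
      have hdiv : ((n : ℝ) / ((n : ℝ) + 2)) ^ δ = (n : ℝ) ^ δ / ((n : ℝ) + 2) ^ δ :=
        Real.div_rpow hn0.le (by positivity : (0:ℝ) ≤ (n:ℝ)+2) δ
      have hfac : ((n + 1 : ℕ).factorial : ℝ) = ((n : ℝ) + 1) * n.factorial := by
        rw [Nat.factorial_succ]; push_cast; ring
      have hbase : (((n + 1 : ℕ) : ℝ) + 1) ^ δ = ((n : ℝ) + 2) ^ δ := by
        congr 1; push_cast; ring
      have hndpos : (0 : ℝ) < (n : ℝ) ^ δ := Real.rpow_pos_of_pos hn0 δ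
      have hn2pos : (0 : ℝ) < ((n : ℝ) + 2) ^ δ := Real.rpow_pos_of_pos (by positivity) δ
      have hfd : (0 : ℝ) < (n.factorial : ℝ) := by exact_mod_cast n.factorial_pos
      simp only [hr_def, hq_def, hGseq, hGn, hns, hdiv, hfac, hbase]
      field_simp
    exact hr.congr' heq
  obtain ⟨C, hC⟩ := key.bddAbove_range
  have keyinv : Tendsto (fun m => (q m)⁻¹) atTop (𝓝 1) := by
    simpa using key.inv₀ one_ne_zero
  obtain ⟨D, hD⟩ := keyinv.bddAbove_range
  have hq0 : 0 < q 0 := hqpos 0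
  have hDpos : 0 < D := lt_of_lt_of_le (inv_pos.mpr hq0) (hD ⟨0, rfl⟩)
  have hCpos : 0 < C := lt_of_lt_of_le hq0 (hC ⟨0, rfl⟩)
  refine ⟨D⁻¹, C, inv_pos.mpr hDpos, hCpos, ?_⟩
  intro m
  have h1 : q m ≤ C := hC ⟨m, rfl⟩
  have h2 : (q m)⁻¹ ≤ D := hD ⟨m, rfl⟩
  have h3 : D⁻¹ ≤ q m := (inv_le_comm₀ hDpos (hqpos m)).mpr h2
  have hfd : ((m.factorial : ℝ)) ≠ 0 := by
    have : (0 : ℝ) < m.factorial := by exact_mod_cast m.factorial_pos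
    exact this.ne'
  have hpow : (0 : ℝ) < ((m : ℝ) + 1) ^ δ := Real.rpow_pos_of_pos (by positivity) δ
  have hrw : Real.Gamma ((m : ℝ) + δ + 1) / (m.factorial : ℝ) = q m * ((m : ℝ) + 1) ^ δ := by
    rw [hq_def]
    field_simp
  rw [hrw]
  exact ⟨mul_le_mul_of_nonneg_right h3 hpow.le, mul_le_mul_of_nonneg_right h1 hpow.le⟩

set_option maxHeartbeats 1000000 in
/-- There are constants `C₁, C₂ > 0` (depending on `γ`) with
`C₁ (n+1)^{min(-1, -1-γ)} ≤ (σ_{n,k}^γ)² ≤ C₂ (n+1)^{max(-1, -1-γ)}` for all `n ≥ 0`,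
`0 ≤ k ≤ n`. -/
theorem sigSq_asymptotics (γ : ℝ) (hγ : -1 < γ) :
    ∃ C₁ C₂ : ℝ, 0 < C₁ ∧ 0 < C₂ ∧ ∀ n k : ℕ, k ≤ n →
      C₁ * ((n : ℝ) + 1) ^ (min (-1 : ℝ) (-1 - γ)) ≤ sigSq γ n k ∧
      sigSq γ n k ≤ C₂ * ((n : ℝ) + 1) ^ (max (-1 : ℝ) (-1 - γ)) := by
  obtain ⟨c₁, c₂, hc₁, hc₂, hc⟩ := sigAux_ratio γ hγ
  obtain ⟨d₁, d₂, hd₁, hd₂, hd⟩ := sigAux_ratio (2 * γ + 1) (by linarith)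
  have hπ : (0 : ℝ) < π := Real.pi_pos
  have hApos : (0 : ℝ) < 2 ^ (2 * γ + 2) * π := by positivity
  set A : ℝ := 2 ^ (2 * γ + 2) * π with hA_def
  refine ⟨A * c₁ * c₁ / d₂, A * c₂ * c₂ / d₁, by positivity, by positivity, ?_⟩
  intro n k hkn
  obtain ⟨j, hj⟩ := Nat.le.dest hkn
  subst hj
  set N : ℝ := ((k + j : ℕ) : ℝ) + 1 with hN_def
  have hNpos : (0 : ℝ) < N := by positivity
  have hk0 : (0 : ℝ) ≤ k := Nat.cast_nonneg k
  have hj0 : (0 : ℝ) ≤ j := Nat.cast_nonneg j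
  have hP1 : N ≤ ((k : ℝ) + 1) * ((j : ℝ) + 1) := by
    rw [hN_def]; push_cast
    nlinarith [mul_nonneg hk0 hj0]
  have hP2 : ((k : ℝ) + 1) * ((j : ℝ) + 1) ≤ N * N := by
    rw [hN_def]; push_cast
    nlinarith [mul_nonneg hk0 hj0]
  have hPpos : (0 : ℝ) < ((k : ℝ) + 1) * ((j : ℝ) + 1) := by positivity
  set P : ℝ := ((k : ℝ) + 1) * ((j : ℝ) + 1) with hP_def
  set N2 : ℝ := N ^ (2 * γ + 1) with hN2_def
  have hN2pos : (0 : ℝ) < N2 := Real.rpow_pos_of_pos hNpos _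
  -- key power bounds
  have hNN : (N * N) ^ γ = N ^ (2 * γ) := by
    rw [Real.mul_rpow hNpos.le hNpos.le, ← Real.rpow_add hNpos]
    ring_nf
  have claim_low : N ^ (min (-1 : ℝ) (-1 - γ)) * N2 ≤ P ^ γ := by
    rw [hN2_def, ← Real.rpow_add hNpos]
    rcases le_or_gt 0 γ with h | h
    · rw [min_eq_right (by linarith : (-1 : ℝ) - γ ≤ -1)]
      rw [show (-1 : ℝ) - γ + (2 * γ + 1) = γ by ring]
      exact Real.rpow_le_rpow hNpos.le hP1 h
    · rw [min_eq_left (by linarith : (-1 : ℝ) ≤ -1 - γ)]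
      rw [show (-1 : ℝ) + (2 * γ + 1) = 2 * γ by ring, ← hNN]
      exact Real.rpow_le_rpow_of_nonpos hPpos hP2 h.le
  have claim_high : P ^ γ ≤ N ^ (max (-1 : ℝ) (-1 - γ)) * N2 := by
    rw [hN2_def, ← Real.rpow_add hNpos]
    rcases le_or_gt 0 γ with h | h
    · rw [max_eq_left (by linarith : (-1 : ℝ) - γ ≤ -1)]
      rw [show (-1 : ℝ) + (2 * γ + 1) = 2 * γ by ring, ← hNN]
      exact Real.rpow_le_rpow hPpos.le hP2 h
    · rw [max_eq_right (by linarith : (-1 : ℝ) ≤ -1 - γ)]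
      rw [show (-1 : ℝ) - γ + (2 * γ + 1) = γ by ring]
      exact Real.rpow_le_rpow_of_nonpos hNpos hP1 h.le
  -- the three Gamma ratios
  set X : ℝ := Real.Gamma ((k : ℝ) + γ + 1) / (k.factorial : ℝ) with hX_def
  set Y : ℝ := Real.Gamma ((j : ℝ) + γ + 1) / (j.factorial : ℝ) with hY_def
  set Z : ℝ := Real.Gamma (((k + j : ℕ) : ℝ) + (2 * γ + 1) + 1) / ((k + j).factorial : ℝ)
    with hZ_def
  have hXb := hc k
  have hYb := hc j
  have hZb := hd (k + j)
  have hKp : (0 : ℝ) < ((k : ℝ) + 1) ^ γ := Real.rpow_pos_of_pos (by positivity) γ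
  have hJp : (0 : ℝ) < ((j : ℝ) + 1) ^ γ := Real.rpow_pos_of_pos (by positivity) γ
  have hXpos : 0 < X := lt_of_lt_of_le (by positivity) hXb.1
  have hYpos : 0 < Y := lt_of_lt_of_le (by positivity) hYb.1
  have hZpos : 0 < Z := lt_of_lt_of_le (by positivity) hZb.1
  have hPg : ((k : ℝ) + 1) ^ γ * ((j : ℝ) + 1) ^ γ = P ^ γ :=
    (Real.mul_rpow (by positivity) (by positivity)).symm
  -- rewrite sigSq
  have hfk : ((k.factorial : ℝ)) ≠ 0 := by
    have : (0 : ℝ) < k.factorial := by exact_mod_cast k.factorial_pos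
    exact this.ne'
  have hfj : ((j.factorial : ℝ)) ≠ 0 := by
    have : (0 : ℝ) < j.factorial := by exact_mod_cast j.factorial_pos
    exact this.ne'
  have hfn : (((k + j).factorial : ℝ)) ≠ 0 := by
    have : (0 : ℝ) < (k + j).factorial := by exact_mod_cast (k + j).factorial_pos
    exact this.ne'
  have hGn_ne : Real.Gamma (((k + j : ℕ) : ℝ) + (2 * γ + 1) + 1) ≠ 0 := by
    apply ne_of_gt
    apply Real.Gamma_pos_of_pos
    have : (0 : ℝ) ≤ ((k + j : ℕ) : ℝ) := Nat.cast_nonneg _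
    linarith
  have hsig : sigSq γ (k + j) k = A * X * Y / Z := by
    rw [sigSq, Nat.cast_choose ℝ (Nat.le_add_right k j)]
    rw [show ((k + j : ℕ) : ℝ) - (k : ℝ) + γ + 1 = (j : ℝ) + γ + 1 by push_cast; ring]
    rw [show ((k + j : ℕ) : ℝ) + 2 * γ + 2 = ((k + j : ℕ) : ℝ) + (2 * γ + 1) + 1 by ring]
    rw [show k + j - k = j from Nat.add_sub_cancel_left k j]
    rw [hX_def, hY_def, hZ_def, hA_def]
    field_simp
  rw [hsig]
  constructor
  · -- lower bound
    have step2 : A * (c₁ * ((k : ℝ) + 1) ^ γ) * (c₁ * ((j : ℝ) + 1) ^ γ) / (d₂ * N2)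
        ≤ A * X * Y / Z := by
      apply div_le_div₀ (by positivity) ?_ hZpos hZb.2
      have h1 : A * (c₁ * ((k : ℝ) + 1) ^ γ) ≤ A * X :=
        mul_le_mul_of_nonneg_left hXb.1 hApos.le
      calc A * (c₁ * ((k : ℝ) + 1) ^ γ) * (c₁ * ((j : ℝ) + 1) ^ γ)
          ≤ A * X * (c₁ * ((j : ℝ) + 1) ^ γ) :=
            mul_le_mul_of_nonneg_right h1 (by positivity)
        _ ≤ A * X * Y := mul_le_mul_of_nonneg_left hYb.1 (by positivity)
    refine le_trans ?_ step2
    have e : A * (c₁ * ((k : ℝ) + 1) ^ γ) * (c₁ * ((j : ℝ) + 1) ^ γ) / (d₂ * N2)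
        = (A * c₁ * c₁ / d₂) * (P ^ γ / N2) := by
      rw [← hPg]; ring
    rw [e]
    apply mul_le_mul_of_nonneg_left _ (by positivity)
    rw [le_div_iff₀ hN2pos]
    exact claim_low
  · -- upper bound
    have step2 : A * X * Y / Z
        ≤ A * (c₂ * ((k : ℝ) + 1) ^ γ) * (c₂ * ((j : ℝ) + 1) ^ γ) / (d₁ * N2) := by
      apply div_le_div₀ (by positivity) ?_ (by positivity) hZb.1
      have h1 : A * X ≤ A * (c₂ * ((k : ℝ) + 1) ^ γ) :=
        mul_le_mul_of_nonneg_left hXb.2 hApos.le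
      calc A * X * Y ≤ A * (c₂ * ((k : ℝ) + 1) ^ γ) * Y :=
            mul_le_mul_of_nonneg_right h1 hYpos.le
        _ ≤ A * (c₂ * ((k : ℝ) + 1) ^ γ) * (c₂ * ((j : ℝ) + 1) ^ γ) :=
            mul_le_mul_of_nonneg_left hYb.2 (by positivity)
    refine le_trans step2 ?_
    have e : A * (c₂ * ((k : ℝ) + 1) ^ γ) * (c₂ * ((j : ℝ) + 1) ^ γ) / (d₁ * N2)
        = (A * c₂ * c₂ / d₁) * (P ^ γ / N2) := by
      rw [← hPg]; ring
    rw [e]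
    apply mul_le_mul_of_nonneg_left _ (by positivity)
    rw [div_le_iff₀ hN2pos]
    exact claim_high


end
end
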